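/- Let Q ∈ ℤ[x_1,…,x_n] be an integral polynomial, q ≥ 2 an integer, and t ∈ U_q. Then |F_q(t,0)| ≤ max_{r ∈ Z_q} | ∑_{d | q} μ(q/d) ( d^{1−n} |V_r(d)| − 1 ) |, where μ is the Möbius function. -/

import Mathlib

open scoped BigOperators

noncomputable section

/-- `e(t) = e^{2πit}`. -/
def e2pi (t : ℝ) : ℂ := Complex.exp (2 * Real.pi * Complex.I * t)

/-- The normalized Weyl sum `F_d(a, 𝐚) = d^{-n} ∑_{s ∈ Z_d^n} e((a·Q(s) + s·𝐚)/d)`. -/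
def weylF (n : ℕ) (Q : MvPolynomial (Fin n) ℤ) (d : ℕ) (a : ℤ) (av : Fin n → ℤ) : ℂ :=
  ((d : ℂ) ^ n)⁻¹ *
    ∑ s : Fin n → Fin d,
      e2pi (((a * MvPolynomial.eval (fun i => ((s i : ℕ) : ℤ)) Q
        + ∑ i, ((s i : ℕ) : ℤ) * av i : ℤ) : ℝ) / (d : ℝ))

/-- `|V_λ(d)| = #{s ∈ (ℤ/dℤ)^n : Q(s) = λ}`. -/
def Vcard (n : ℕ) (Q : MvPolynomial (Fin n) ℤ) (d : ℕ) (lam : ℤ) : ℕ :=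
  Nat.card {s : Fin n → ZMod d //
    MvPolynomial.eval s (MvPolynomial.map (Int.castRingHom (ZMod d)) Q) = (lam : ZMod d)}

namespace Stmt12Aux

open Finset

lemma geom_zero {η : ℂ} (hη : η ≠ 1) {m : ℕ} (h1 : η ^ m = 1) :
    ∑ k ∈ Finset.range m, η ^ k = 0 := by
  rw [geom_sum_eq hη, h1, sub_self, zero_div]

lemma sum_range_mul' {M : Type*} [AddCommMonoid M] (d m : ℕ) (hd : 0 < d) (f : ℕ → M) :
    ∑ r ∈ Finset.range (d * m), f r
      = ∑ k ∈ Finset.range m, ∑ r0 ∈ Finset.range d, f (d * k + r0) := by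
  rw [← Finset.sum_product']
  refine Finset.sum_nbij' (fun r => (r / d, r % d)) (fun p => d * p.1 + p.2) ?_ ?_ ?_ ?_ ?_
  · intro a ha
    simp only [Finset.mem_range, Finset.mem_product] at *
    refine ⟨(Nat.div_lt_iff_lt_mul hd).2 (by rwa [mul_comm] at ha), Nat.mod_lt _ hd⟩
  · intro p hp
    simp only [Finset.mem_range, Finset.mem_product] at *
    calc d * p.1 + p.2 < d * p.1 + d := by omega
      _ = d * (p.1 + 1) := by ring
      _ ≤ d * m := Nat.mul_le_mul_left d (by omega)
  · intro a _; exact Nat.div_add_mod a d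
  · intro p hp
    simp only [Finset.mem_range, Finset.mem_product] at hp
    have h1 : (d * p.1 + p.2) / d = p.1 := by
      rw [Nat.mul_add_div hd, Nat.div_eq_of_lt hp.2, add_zero]
    have h2 : (d * p.1 + p.2) % d = p.2 := by
      rw [Nat.mul_add_mod, Nat.mod_eq_of_lt hp.2]
    simp [h1, h2]
  · intro a _; rw [Nat.div_add_mod]

lemma Vcard_congr (n : ℕ) (Q : MvPolynomial (Fin n) ℤ) (d : ℕ) {a b : ℤ}
    (h : (a : ZMod d) = (b : ZMod d)) : Vcard n Q d a = Vcard n Q d b := by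
  unfold Vcard; rw [h]

lemma Vcard_cast_sum (n : ℕ) (Q : MvPolynomial (Fin n) ℤ) (d : ℕ) [NeZero d] (lam : ℤ) :
    (Vcard n Q d lam : ℂ) =
      ∑ s : Fin n → ZMod d,
        if MvPolynomial.eval s (MvPolynomial.map (Int.castRingHom (ZMod d)) Q) = (lam : ZMod d)
        then (1:ℂ) else 0 := by
  classical
  rw [Vcard, Nat.card_eq_fintype_card, Fintype.card_subtype, Finset.card_filter, Nat.cast_sum]
  exact Finset.sum_congr rfl fun s _ => by split <;> simp

lemma eval_compat (n q : ℕ) (Q : MvPolynomial (Fin n) ℤ) (s : Fin n → Fin q) :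
    ((MvPolynomial.eval (fun i => ((s i : ℕ) : ℤ)) Q : ℤ) : ZMod q)
      = MvPolynomial.eval (fun i => ((s i : ℕ) : ZMod q))
          (MvPolynomial.map (Int.castRingHom (ZMod q)) Q) := by
  rw [MvPolynomial.eval_map]
  have h := MvPolynomial.eval₂_comp_left (Int.castRingHom (ZMod q)) (RingHom.id ℤ)
      (fun i => ((s i : ℕ) : ℤ)) Q
  simp only [MvPolynomial.eval, MvPolynomial.coe_eval₂Hom, RingHom.comp_id] at h ⊢
  have h0 : ((MvPolynomial.eval₂ (RingHom.id ℤ) (fun i => ((s i : ℕ) : ℤ)) Q : ℤ) : ZMod q)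
      = (Int.castRingHom (ZMod q)) (MvPolynomial.eval₂ (RingHom.id ℤ) (fun i => ((s i : ℕ) : ℤ)) Q) := rfl
  rw [h0, h]
  congr 1
  funext i
  simp [Function.comp]

/-- The Möbius-weighted sum appearing on the RHS. -/
def Sfun (n : ℕ) (Q : MvPolynomial (Fin n) ℤ) (q : ℕ) (r : ℕ) : ℂ :=
  ∑ d ∈ q.divisors, (ArithmeticFunction.moebius (q / d) : ℂ) *
    ((d : ℂ) ^ ((1 : ℤ) - (n : ℤ)) * (Vcard n Q d ((r : ℕ) : ℤ) : ℂ) - 1)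

end Stmt12Aux

open Stmt12Aux Finset

theorem stmt12 (n : ℕ) (hn : 1 ≤ n) (Q : MvPolynomial (Fin n) ℤ)
    (q : ℕ) (hq : 2 ≤ q) (t : ℕ) (ht : t < q) (htq : Nat.gcd t q = 1) :
    ‖weylF n Q q (t : ℤ) 0‖ ≤
      ⨆ r : Fin q,
        ‖∑ d ∈ q.divisors, (ArithmeticFunction.moebius (q / d) : ℂ) *
          ((d : ℂ) ^ ((1 : ℤ) - (n : ℤ)) * (Vcard n Q d ((r : ℕ) : ℤ) : ℂ) - 1)‖ := by
  classical
  haveI : NeZero q := ⟨by omega⟩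
  have hq0 : q ≠ 0 := by omega
  have hqC : ((q : ℂ)) ≠ 0 := by exact_mod_cast hq0
  set ζ : ℂ := Complex.exp (2 * Real.pi * Complex.I / q) with hζdef
  have hζ : IsPrimitiveRoot ζ q := Complex.isPrimitiveRoot_exp q hq0
  have hζ0 : ζ ≠ 0 := Complex.exp_ne_zero _
  -- t is a unit mod q
  have ht0 : 0 < t := by
    rcases Nat.eq_zero_or_pos t with h | h
    · subst h; simp [Nat.gcd_zero_left] at htq; omega
    · exact h
  have hqt : ¬ (q ∣ t) := fun h => by have := Nat.le_of_dvd ht0 h; omega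
  -- e2pi in terms of ζ
  have e2pi_int : ∀ x : ℤ, e2pi ((x : ℝ) / (q : ℝ)) = ζ ^ x := by
    intro x
    rw [e2pi, hζdef]
    rw [show ((((x:ℝ)/(q:ℝ)) : ℝ) : ℂ) = (x:ℂ)/(q:ℂ) by push_cast; ring]
    rw [show 2 * (Real.pi:ℂ) * Complex.I * ((x:ℂ)/(q:ℂ))
        = (x:ℂ) * (2 * Real.pi * Complex.I / (q:ℂ)) by ring]
    exact Complex.exp_int_mul _ x
  have hζq : ζ ^ (q:ℤ) = 1 := by
    rw [zpow_natCast]; exact hζ.pow_eq_one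
  have zeta_congr : ∀ x y : ℤ, (x : ZMod q) = (y : ZMod q) → ζ ^ x = ζ ^ y := by
    intro x y h
    have hd : (q:ℤ) ∣ x - y :=
      Int.ModEq.dvd ((ZMod.intCast_eq_intCast_iff _ _ _).mp h).symm
    obtain ⟨c, hc⟩ := hd
    have : x = y + (q:ℤ) * c := by omega
    rw [this, zpow_add₀ hζ0, zpow_mul, hζq, one_zpow, mul_one]
  set Qbar := MvPolynomial.map (Int.castRingHom (ZMod q)) Q with hQbar
  have hbij : Function.Bijective (fun s : Fin n → Fin q => fun i => ((s i : ℕ) : ZMod q)) := by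
    constructor
    · intro a b hab
      funext i
      have h1 : ((a i : ℕ) : ZMod q) = ((b i : ℕ) : ZMod q) := congrFun hab i
      have h2 : ((a i : ℕ) : ZMod q).val = ((b i : ℕ) : ZMod q).val := by rw [h1]
      rwa [ZMod.val_natCast, ZMod.val_natCast, Nat.mod_eq_of_lt (a i).isLt,
        Nat.mod_eq_of_lt (b i).isLt, ← Fin.ext_iff] at h2
    · intro u
      refine ⟨fun i => ⟨(u i).val, ZMod.val_lt _⟩, funext fun i => ?_⟩
      exact ZMod.natCast_rightInverse (u i)
  have hW : (q:ℂ)^n * weylF n Q q (t:ℤ) 0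
      = ∑ u : Fin n → ZMod q, ζ ^ (t * (MvPolynomial.eval u Qbar).val) := by
    rw [weylF, ← mul_assoc, mul_inv_cancel₀ (pow_ne_zero n hqC), one_mul]
    have hterm : ∀ s : Fin n → Fin q,
        e2pi ((((t:ℤ) * MvPolynomial.eval (fun i => ((s i : ℕ) : ℤ)) Q
          + ∑ i, ((s i : ℕ) : ℤ) * (0 : Fin n → ℤ) i : ℤ) : ℝ) / (q : ℝ))
        = ζ ^ (t * (MvPolynomial.eval (fun i => ((s i : ℕ) : ZMod q)) Qbar).val) := by
      intro s
      rw [show (∑ i, ((s i : ℕ) : ℤ) * (0 : Fin n → ℤ) i) = 0 by simp, add_zero]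
      rw [e2pi_int]
      rw [← zpow_natCast ζ (t * (MvPolynomial.eval (fun i => ((s i : ℕ) : ZMod q)) Qbar).val)]
      apply zeta_congr
      push_cast
      congr 1
      rw [eval_compat n q Q s]
      exact (ZMod.natCast_rightInverse _).symm
    calc (∑ s : Fin n → Fin q, e2pi ((((t:ℤ) * MvPolynomial.eval (fun i => ((s i : ℕ) : ℤ)) Q
            + ∑ i, ((s i : ℕ) : ℤ) * (0 : Fin n → ℤ) i : ℤ) : ℝ) / (q : ℝ)))
        = ∑ s : Fin n → Fin q,
            ζ ^ (t * (MvPolynomial.eval (fun i => ((s i : ℕ) : ZMod q)) Qbar).val) :=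
          Finset.sum_congr rfl fun s _ => hterm s
      _ = ∑ u : Fin n → ZMod q, ζ ^ (t * (MvPolynomial.eval u Qbar).val) :=
          Fintype.sum_bijective _ hbij _ _ (fun s => rfl)
  -- the d = q term
  have hAq : ∑ r ∈ range q, ζ^(t*r) * (Vcard n Q q (r:ℤ) : ℂ)
      = (q:ℂ)^n * weylF n Q q (t:ℤ) 0 := by
    rw [hW]
    calc ∑ r ∈ range q, ζ^(t*r) * (Vcard n Q q (r:ℤ) : ℂ)
        = ∑ r ∈ range q, ∑ u : Fin n → ZMod q,
            (if MvPolynomial.eval u Qbar = ((r:ℤ) : ZMod q) then ζ^(t*r) else 0) := by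
          refine Finset.sum_congr rfl fun r _ => ?_
          rw [Vcard_cast_sum, Finset.mul_sum]
          exact Finset.sum_congr rfl fun u _ => by rw [mul_ite, mul_one, mul_zero]
      _ = ∑ u : Fin n → ZMod q, ∑ r ∈ range q,
            (if MvPolynomial.eval u Qbar = ((r:ℤ) : ZMod q) then ζ^(t*r) else 0) :=
          Finset.sum_comm
      _ = ∑ u : Fin n → ZMod q, ζ ^ (t * (MvPolynomial.eval u Qbar).val) := by
          refine Finset.sum_congr rfl fun u _ => ?_
          rw [Finset.sum_eq_single_of_mem ((MvPolynomial.eval u Qbar).val)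
            (Finset.mem_range.mpr (ZMod.val_lt _))]
          · rw [if_pos]
            push_cast
            exact (ZMod.natCast_rightInverse _).symm
          · intro r hr hne
            rw [if_neg]
            intro hcon
            apply hne
            have : (((r:ℤ) : ZMod q)).val = r := by
              rw [show ((r:ℤ) : ZMod q) = ((r:ℕ) : ZMod q) by push_cast; rfl,
                ZMod.val_natCast, Nat.mod_eq_of_lt (Finset.mem_range.mp hr)]
            rw [← this, hcon]
  -- the d < q terms vanish
  have hAd : ∀ d, d ∣ q → d ≠ q →
      ∑ r ∈ range q, ζ^(t*r) * (Vcard n Q d (r:ℤ) : ℂ) = 0 := by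
    intro d hdvd hdq
    have hd0 : 0 < d := Nat.pos_of_dvd_of_pos hdvd (by omega)
    obtain ⟨m, hm⟩ := hdvd
    have hη : (ζ ^ (t*d)) ≠ 1 := by
      intro hcon
      rw [hζ.pow_eq_one_iff_dvd] at hcon
      have hqd : q ∣ d := Nat.Coprime.dvd_of_dvd_mul_left (Nat.coprime_comm.mp htq) hcon
      exact hdq (Nat.dvd_antisymm ⟨m, hm⟩ hqd)
    have hgeom : ∑ k ∈ range m, (ζ^(t*d))^k = 0 := by
      refine geom_zero hη ?_
      rw [← pow_mul]
      exact (hζ.pow_eq_one_iff_dvd _).mpr ⟨t, by rw [hm]; ring⟩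
    rw [hm, sum_range_mul' d m hd0]
    have hVc : ∀ k r0, (Vcard n Q d ((d*k+r0 : ℕ) : ℤ) : ℂ) = (Vcard n Q d (r0:ℤ) : ℂ) := by
      intro k r0
      congr 1
      apply Vcard_congr
      push_cast
      simp [ZMod.natCast_self]
    calc ∑ k ∈ range m, ∑ r0 ∈ range d, ζ^(t*(d*k+r0)) * (Vcard n Q d ((d*k+r0 : ℕ):ℤ) : ℂ)
        = ∑ k ∈ range m, ∑ r0 ∈ range d,
            (ζ^(t*d))^k * (ζ^(t*r0) * (Vcard n Q d (r0:ℤ) : ℂ)) := by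
          refine Finset.sum_congr rfl fun k _ => Finset.sum_congr rfl fun r0 _ => ?_
          rw [hVc, show t*(d*k+r0) = (t*d)*k + t*r0 by ring, pow_add, pow_mul, mul_assoc]
      _ = (∑ k ∈ range m, (ζ^(t*d))^k)
            * (∑ r0 ∈ range d, ζ^(t*r0) * (Vcard n Q d (r0:ℤ) : ℂ)) :=
          (Finset.sum_mul_sum _ _ _ _).symm
      _ = 0 := by rw [hgeom, zero_mul]
  -- the constant term vanishes
  have h0 : ∑ r ∈ range q, ζ^(t*r) = 0 := by
    have hη : (ζ ^ t) ≠ 1 := fun hcon => hqt ((hζ.pow_eq_one_iff_dvd _).mp hcon)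
    calc ∑ r ∈ range q, ζ^(t*r) = ∑ r ∈ range q, (ζ^t)^r :=
          Finset.sum_congr rfl fun r _ => by rw [← pow_mul]
      _ = 0 := geom_zero hη
          (by rw [← pow_mul]; exact (hζ.pow_eq_one_iff_dvd _).mpr ⟨t, mul_comm t q⟩)
  -- key identity
  have key : ∑ r ∈ range q, ζ^(t*r) * Sfun n Q q r = (q:ℂ) * weylF n Q q (t:ℤ) 0 := by
    have step1 : ∑ r ∈ range q, ζ^(t*r) * Sfun n Q q r
        = ∑ d ∈ q.divisors, (ArithmeticFunction.moebius (q / d) : ℂ) *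
            ((d : ℂ) ^ ((1 : ℤ) - (n : ℤ)) * (∑ r ∈ range q, ζ^(t*r) * (Vcard n Q d (r:ℤ) : ℂ))) := by
      calc ∑ r ∈ range q, ζ^(t*r) * Sfun n Q q r
          = ∑ r ∈ range q, ∑ d ∈ q.divisors, ζ^(t*r) *
              ((ArithmeticFunction.moebius (q / d) : ℂ) *
                ((d : ℂ) ^ ((1 : ℤ) - (n : ℤ)) * (Vcard n Q d (r:ℤ) : ℂ) - 1)) := by
            refine Finset.sum_congr rfl fun r _ => ?_
            rw [Sfun, Finset.mul_sum]
        _ = ∑ d ∈ q.divisors, ∑ r ∈ range q, ζ^(t*r) *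
              ((ArithmeticFunction.moebius (q / d) : ℂ) *
                ((d : ℂ) ^ ((1 : ℤ) - (n : ℤ)) * (Vcard n Q d (r:ℤ) : ℂ) - 1)) :=
            Finset.sum_comm
        _ = ∑ d ∈ q.divisors, (ArithmeticFunction.moebius (q / d) : ℂ) *
              ((d : ℂ) ^ ((1 : ℤ) - (n : ℤ)) * (∑ r ∈ range q, ζ^(t*r) * (Vcard n Q d (r:ℤ) : ℂ))) := by
            refine Finset.sum_congr rfl fun d _ => ?_
            calc ∑ r ∈ range q, ζ^(t*r) *
                  ((ArithmeticFunction.moebius (q / d) : ℂ) *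
                    ((d : ℂ) ^ ((1 : ℤ) - (n : ℤ)) * (Vcard n Q d (r:ℤ) : ℂ) - 1))
                = ∑ r ∈ range q,
                    ((ArithmeticFunction.moebius (q / d) : ℂ) * ((d : ℂ) ^ ((1 : ℤ) - (n : ℤ))) *
                      (ζ^(t*r) * (Vcard n Q d (r:ℤ) : ℂ))
                     - (ArithmeticFunction.moebius (q / d) : ℂ) * ζ^(t*r)) :=
                  Finset.sum_congr rfl fun r _ => by ring
              _ = (ArithmeticFunction.moebius (q / d) : ℂ) * ((d : ℂ) ^ ((1 : ℤ) - (n : ℤ))) *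
                    (∑ r ∈ range q, ζ^(t*r) * (Vcard n Q d (r:ℤ) : ℂ))
                  - (ArithmeticFunction.moebius (q / d) : ℂ) * (∑ r ∈ range q, ζ^(t*r)) := by
                  rw [Finset.sum_sub_distrib, ← Finset.mul_sum, ← Finset.mul_sum]
              _ = (ArithmeticFunction.moebius (q / d) : ℂ) *
                    ((d : ℂ) ^ ((1 : ℤ) - (n : ℤ)) *
                      (∑ r ∈ range q, ζ^(t*r) * (Vcard n Q d (r:ℤ) : ℂ))) := by
                  rw [h0, mul_zero, sub_zero, mul_assoc]
    rw [step1]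
    rw [Finset.sum_eq_single_of_mem q (Nat.mem_divisors_self q hq0)
      (fun d hd hne => by rw [hAd d (Nat.mem_divisors.mp hd).1 hne, mul_zero, mul_zero])]
    rw [Nat.div_self (by omega : 0 < q), hAq]
    have hmu1 : (ArithmeticFunction.moebius 1 : ℤ) = 1 := ArithmeticFunction.moebius_apply_one
    rw [hmu1]
    push_cast
    rw [one_mul, show ((q:ℂ))^((1:ℤ)-(n:ℤ)) * ((q:ℂ)^n * weylF n Q q (t:ℤ) 0)
        = ((q:ℂ)^((1:ℤ)-(n:ℤ)) * (q:ℂ)^(n:ℤ)) * weylF n Q q (t:ℤ) 0 by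
          rw [zpow_natCast]; ring]
    rw [← zpow_add₀ hqC, show (1:ℤ) - (n:ℤ) + (n:ℤ) = 1 by ring, zpow_one]
  -- norm of ζ
  have hnormζ : ‖ζ‖ = 1 := by
    have hz : 2 * (Real.pi:ℂ) * Complex.I / (q:ℂ) = ((2 * Real.pi / q : ℝ) : ℂ) * Complex.I := by
      push_cast; ring
    rw [hζdef, hz, Complex.norm_exp]
    simp
  -- final bound
  haveI : Nonempty (Fin q) := ⟨⟨0, by omega⟩⟩
  have hb : BddAbove (Set.range fun r : Fin q => ‖Sfun n Q q (r:ℕ)‖) :=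
    Finite.bddAbove_range _
  have chain : (q:ℝ) * ‖weylF n Q q (t:ℤ) 0‖
      ≤ (q:ℝ) * ⨆ r : Fin q, ‖Sfun n Q q (r:ℕ)‖ := by
    calc (q:ℝ) * ‖weylF n Q q (t:ℤ) 0‖ = ‖(q:ℂ) * weylF n Q q (t:ℤ) 0‖ := by
          rw [norm_mul, Complex.norm_natCast]
      _ = ‖∑ r ∈ range q, ζ^(t*r) * Sfun n Q q r‖ := by rw [key]
      _ ≤ ∑ r ∈ range q, ‖ζ^(t*r) * Sfun n Q q r‖ := norm_sum_le _ _
      _ = ∑ r ∈ range q, ‖Sfun n Q q r‖ := Finset.sum_congr rfl fun r _ => by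
          rw [norm_mul, norm_pow, hnormζ, one_pow, one_mul]
      _ = ∑ r : Fin q, ‖Sfun n Q q (r:ℕ)‖ :=
          (Fin.sum_univ_eq_sum_range (fun r => ‖Sfun n Q q r‖) q).symm
      _ ≤ ∑ _r : Fin q, ⨆ r' : Fin q, ‖Sfun n Q q (r':ℕ)‖ :=
          Finset.sum_le_sum fun r _ => le_ciSup hb r
      _ = (q:ℝ) * ⨆ r : Fin q, ‖Sfun n Q q (r:ℕ)‖ := by
          rw [Finset.sum_const, Finset.card_univ, Fintype.card_fin, nsmul_eq_mul]
  exact le_of_mul_le_mul_left chain (by exact_mod_cast (by omega : 0 < q))
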